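/- Let a, b > 0 and x ∈ ℝ. Then the infimum, over all pairs of measurable functions f, g : (0,1) → ℝ with f(t) + g(t) = x for μ-almost every t, of ∫₀¹ (a·f(t)²/t + b·g(t)²/(1−t)) dμ(t), equals √(a·b)·x², where dμ(t) = dt/(π√(t(1−t))). -/

import Mathlib

open MeasureTheory
open scoped ENNReal

section PWAux
open Set Real


-- the arctan integral
lemma arctan_integral (a b c : ℝ) (ha : 0 < a) (hb : 0 < b) (hc : 0 ≤ c) :
    ∫⁻ u in Ioi (0:ℝ), ENNReal.ofReal (2*a*b*c/(Real.pi*(a+b*u^2)))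
      = ENNReal.ofReal (Real.sqrt (a*b) * c) := by
  set k : ℝ := Real.sqrt (b/a) with hk
  set C : ℝ := 2*Real.sqrt (a*b)*c/Real.pi with hC
  have hkpos : 0 < k := Real.sqrt_pos.2 (div_pos hb ha)
  have hk2 : k^2 = b/a := Real.sq_sqrt (div_pos hb ha).le
  have hsk : Real.sqrt (a*b) * k = b := by
    rw [hk, ← Real.sqrt_mul (mul_nonneg ha.le hb.le)]
    rw [show a*b*(b/a) = b^2 by field_simp, Real.sqrt_sq hb.le]
  have hderiv : ∀ u ∈ Ici (0:ℝ),
      HasDerivAt (fun u => C * Real.arctan (k*u)) (2*a*b*c/(Real.pi*(a+b*u^2))) u := by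
    intro u _
    have h1 : HasDerivAt (fun u : ℝ => k*u) k u := by
      simpa using (hasDerivAt_id u).const_mul k
    have h2 := (Real.hasDerivAt_arctan (k*u)).comp u h1
    have h3 := h2.const_mul C
    refine h3.congr_deriv ?_
    symm
    have hden : (0:ℝ) < a + b*u^2 := by positivity
    have h4 : 1 + (k*u)^2 = (a + b*u^2)/a := by
      rw [mul_pow, hk2]; field_simp
    rw [h4, hC]
    have hpi := Real.pi_pos
    rw [Real.sqrt_mul ha.le] at hsk ⊢
    field_simp
    linear_combination (-c) * hsk
  have hpos : ∀ u ∈ Ioi (0:ℝ), 0 ≤ 2*a*b*c/(Real.pi*(a+b*u^2)) := by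
    intro u _; positivity
  have htends : Filter.Tendsto (fun u => C * Real.arctan (k*u)) Filter.atTop
      (nhds (Real.sqrt (a*b) * c)) := by
    have h1 : Filter.Tendsto (fun u : ℝ => k*u) Filter.atTop Filter.atTop :=
      Filter.Tendsto.const_mul_atTop hkpos Filter.tendsto_id
    have h2 : Filter.Tendsto (fun u => Real.arctan (k*u)) Filter.atTop (nhds (Real.pi/2)) :=
      (Real.tendsto_arctan_atTop.mono_right nhdsWithin_le_nhds).comp h1
    have h3 := h2.const_mul C
    convert h3 using 2
    rw [hC]; field_simp
  have hint := integral_Ioi_of_hasDerivAt_of_nonneg'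
    (fun u hu => hderiv u hu) hpos htends
  have hintegrable := integrableOn_Ioi_deriv_of_nonneg'
    (fun u hu => hderiv u hu) hpos htends
  rw [← MeasureTheory.ofReal_integral_eq_lintegral_ofReal hintegrable
    (Filter.Eventually.of_forall (fun u => by positivity))]
  rw [hint]
  norm_num

lemma keyIntegral (a b c : ℝ) (ha : 0 < a) (hb : 0 < b) (hc : 0 ≤ c) :
    ∫⁻ t in Ioo (0:ℝ) 1,
        ENNReal.ofReal (1/(Real.pi*Real.sqrt (t*(1-t))) * (c/(t/a+(1-t)/b)))
      = ENNReal.ofReal (Real.sqrt (a*b)*c) := by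
  set φ : ℝ → ℝ := fun u => u^2/(1+u^2) with hφ
  set φ' : ℝ → ℝ := fun u => 2*u/(1+u^2)^2 with hφ'
  have hd : ∀ u : ℝ, HasDerivAt φ (φ' u) u := by
    intro u
    have h1u : (0:ℝ) < 1 + u^2 := by positivity
    have h1 : HasDerivAt (fun u : ℝ => u^2) (2*u) u := by
      simpa using (hasDerivAt_pow 2 u)
    have h2 : HasDerivAt (fun u : ℝ => 1+u^2) (2*u) u := by
      simpa using h1.const_add 1
    have h3 := h1.div h2 (ne_of_gt h1u)
    refine h3.congr_deriv ?_
    simp only [hφ']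
    field_simp
    ring
  have hinj : InjOn φ (Ioi 0) := by
    intro u hu v hv h
    simp only [hφ, mem_Ioi] at h hu hv
    have h1u : (0:ℝ) < 1 + u^2 := by positivity
    have h1v : (0:ℝ) < 1 + v^2 := by positivity
    have h2 : u^2 = v^2 := by
      field_simp at h; nlinarith [h]
    nlinarith [h2, hu, hv]
  have himg : φ '' (Ioi 0) = Ioo 0 1 := by
    ext t
    constructor
    · rintro ⟨u, hu, rfl⟩
      simp only [mem_Ioi] at hu
      have h1u : (0:ℝ) < 1 + u^2 := by positivity
      constructor
      · positivity
      · rw [div_lt_one h1u]; nlinarith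
    · rintro ⟨ht0, ht1⟩
      have h1t : (0:ℝ) < 1 - t := by linarith
      have hdv : (0:ℝ) < t/(1-t) := div_pos ht0 h1t
      refine ⟨Real.sqrt (t/(1-t)), Real.sqrt_pos.2 hdv, ?_⟩
      show (Real.sqrt (t/(1-t)))^2/(1+(Real.sqrt (t/(1-t)))^2) = t
      rw [Real.sq_sqrt hdv.le]
      field_simp
      ring
  have key := lintegral_image_eq_lintegral_abs_det_fderiv_mul volume measurableSet_Ioi
    (fun u _ => (hd u).hasDerivWithinAt.hasFDerivWithinAt) hinj
    (fun t => ENNReal.ofReal (1/(Real.pi*Real.sqrt (t*(1-t))) * (c/(t/a+(1-t)/b))))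
  rw [himg] at key
  rw [key, ← arctan_integral a b c ha hb hc]
  apply setLIntegral_congr_fun measurableSet_Ioi
  intro u hu
  simp only [mem_Ioi] at hu
  have h1u : (0:ℝ) < 1 + u^2 := by positivity
  have hden : (0:ℝ) < a + b*u^2 := by positivity
  have hpi := Real.pi_pos
  beta_reduce
  rw [ContinuousLinearMap.det_toSpanSingleton]
  rw [← ENNReal.ofReal_mul (abs_nonneg _)]
  congr 1
  have habs : |φ' u| = 2*u/(1+u^2)^2 := by
    rw [hφ']; exact abs_of_nonneg (by positivity)
  have hsq : φ u * (1 - φ u) = (u/(1+u^2))^2 := by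
    simp only [hφ]; field_simp; ring
  have hsqrt : Real.sqrt (φ u * (1 - φ u)) = u/(1+u^2) := by
    rw [hsq, Real.sqrt_sq (by positivity)]
  have hD : φ u/a + (1 - φ u)/b = (a+b*u^2)/(a*b*(1+u^2)) := by
    simp only [hφ]; field_simp; ring
  rw [habs, hsqrt, hD]
  field_simp

lemma pointwise_ineq (a b t f g : ℝ) (ha : 0 < a) (hb : 0 < b)
    (ht0 : 0 < t) (ht1 : t < 1) :
    (f+g)^2/(t/a+(1-t)/b) ≤ a*f^2/t + b*g^2/(1-t) := by
  have h1t : (0:ℝ) < 1 - t := by linarith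
  have hD : (0:ℝ) < t/a+(1-t)/b := by positivity
  rw [div_le_iff₀ hD]
  have e : (a*f^2/t + b*g^2/(1-t))*(t/a+(1-t)/b) - (f+g)^2
      = (a*(1-t)*f - b*t*g)^2/(a*b*t*(1-t)) := by
    field_simp; ring
  have h2 : 0 ≤ (a*(1-t)*f - b*t*g)^2/(a*b*t*(1-t)) := by positivity
  linarith [e, h2]


end PWAux

open Set in
/-- Scalar Pusz–Woronowicz formula: for `a, b > 0` and `x ∈ ℝ`, the infimum over
all measurable decompositions `f + g = x` (μ-a.e.) of
`∫ (a f(t)²/t + b g(t)²/(1−t)) dμ(t)` equals `√(ab)·x²`, where `μ` is the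
arcsine measure `dμ(t) = dt/(π√(t(1−t)))` on `(0,1)`. -/
theorem puszWoronowicz_scalar (a b : ℝ) (ha : 0 < a) (hb : 0 < b) (x : ℝ) :
    sInf {r : ℝ≥0∞ | ∃ f g : ℝ → ℝ, Measurable f ∧ Measurable g ∧
        (∀ᵐ t ∂((volume.restrict (Set.Ioo (0 : ℝ) 1)).withDensity
            (fun t => ENNReal.ofReal (1 / (Real.pi * Real.sqrt (t * (1 - t)))))),
          f t + g t = x) ∧
        r = ∫⁻ t, ENNReal.ofReal (a * (f t) ^ 2 / t + b * (g t) ^ 2 / (1 - t))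
            ∂((volume.restrict (Set.Ioo (0 : ℝ) 1)).withDensity
              (fun t => ENNReal.ofReal (1 / (Real.pi * Real.sqrt (t * (1 - t))))))}
      = ENNReal.ofReal (Real.sqrt (a * b) * x ^ 2) := by
  have hwmeas : Measurable (fun t : ℝ => ENNReal.ofReal (1 / (Real.pi * Real.sqrt (t * (1 - t))))) := by
    fun_prop
  have hwnn : ∀ t : ℝ, 0 ≤ 1 / (Real.pi * Real.sqrt (t * (1 - t))) := by
    intro t
    have h1 : 0 ≤ Real.pi * Real.sqrt (t*(1-t)) :=
      mul_nonneg Real.pi_pos.le (Real.sqrt_nonneg _)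
    positivity
  apply le_antisymm
  · -- upper bound: the minimizer
    apply sInf_le
    refine ⟨fun t => x*((t/a)/(t/a+(1-t)/b)), fun t => x - x*((t/a)/(t/a+(1-t)/b)),
      by fun_prop, by fun_prop, Filter.Eventually.of_forall (fun t => by ring), ?_⟩
    rw [lintegral_withDensity_eq_lintegral_mul _ hwmeas (by fun_prop)]
    rw [← keyIntegral a b (x^2) ha hb (sq_nonneg x)]
    apply setLIntegral_congr_fun measurableSet_Ioo
    intro t ht
    obtain ⟨ht0, ht1⟩ := ht
    have h1t : (0:ℝ) < 1 - t := by linarith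
    have hD : (0:ℝ) < t/a+(1-t)/b := by positivity
    simp only [Pi.mul_apply]
    rw [← ENNReal.ofReal_mul (hwnn t)]
    congr 1
    have : a*(x*((t/a)/(t/a+(1-t)/b)))^2/t + b*(x - x*((t/a)/(t/a+(1-t)/b)))^2/(1-t)
        = x^2/(t/a+(1-t)/b) := by
      field_simp
      ring
    rw [this]
  · -- lower bound
    apply le_sInf
    rintro r ⟨f, g, hf, hg, hae, rfl⟩
    rw [lintegral_withDensity_eq_lintegral_mul _ hwmeas (by fun_prop)]
    have hae' : ∀ᵐ t ∂(volume.restrict (Ioo (0:ℝ) 1)), f t + g t = x := by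
      rw [ae_withDensity_iff hwmeas] at hae
      filter_upwards [hae, ae_restrict_mem measurableSet_Ioo] with t h1 h2
      apply h1
      have hpos : 0 < 1/(Real.pi*Real.sqrt (t*(1-t))) := by
        have h3 : 0 < Real.sqrt (t*(1-t)) :=
          Real.sqrt_pos.2 (mul_pos h2.1 (by linarith [h2.2]))
        have := Real.pi_pos
        positivity
      exact (ENNReal.ofReal_pos.2 hpos).ne'
    rw [← keyIntegral a b (x^2) ha hb (sq_nonneg x)]
    apply lintegral_mono_ae
    filter_upwards [hae', ae_restrict_mem measurableSet_Ioo] with t hx ht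
    obtain ⟨ht0, ht1⟩ := ht
    simp only [Pi.mul_apply]
    rw [← ENNReal.ofReal_mul (hwnn t)]
    apply ENNReal.ofReal_le_ofReal
    apply mul_le_mul_of_nonneg_left _ (hwnn t)
    calc x^2/(t/a+(1-t)/b) = (f t + g t)^2/(t/a+(1-t)/b) := by rw [hx]
    _ ≤ a*(f t)^2/t + b*(g t)^2/(1-t) := pointwise_ineq a b t (f t) (g t) ha hb ht0 ht1
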